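/- Let G be a tree (a connected acyclic simple graph) with vertex set V and graph metric d, let v ∈ V, and let r ≥ 1 and k ≥ 1 be integers. On the annulus A_k = {x ∈ V : k·r ≤ d(v,x) ≤ (k+1)·r}, define x ∼_k y if and only if the median m of the triple x, y, v satisfies 2·d(v,m) ≥ (2k−1)·r. Then ∼_k is an equivalence relation on A_k. -/

import Mathlib

/-- `m` is the median (center of the tripod) of the vertices `x`, `y`, `v` in the
graph `G`, with respect to the graph metric. -/
def IsTreeMedian {V : Type*} (G : SimpleGraph V) (x y v m : V) : Prop :=
  G.dist x y = G.dist x m + G.dist m y ∧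
  G.dist x v = G.dist x m + G.dist m v ∧
  G.dist y v = G.dist y m + G.dist m v

namespace TreeAux

open SimpleGraph Walk

variable {V : Type*} [DecidableEq V] {G : SimpleGraph V}

/-- In a tree, every path realizes the distance. -/
lemma path_length_eq (hG : G.IsTree) {a b : V} (p : G.Walk a b) (hp : p.IsPath) :
    p.length = G.dist a b := by
  obtain ⟨q, hq⟩ := (p.reachable).exists_walk_length_eq_dist
  have hb : q.bypass.IsPath := q.bypass_isPath
  have hpb : p = q.bypass := (hG.existsUnique_path a b).unique hp hb
  refine le_antisymm ?_ (SimpleGraph.dist_le p)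
  calc p.length = q.bypass.length := by rw [hpb]
    _ ≤ q.length := q.length_bypass_le
    _ = G.dist a b := hq

lemma append_isPath {x a b : V} {A : G.Walk x a} {B : G.Walk a b}
    (hA : A.IsPath) (hB : B.IsPath)
    (h : ∀ c, c ∈ A.support → c ∈ B.support → c = a) : (A.append B).IsPath := by
  rw [Walk.isPath_def, Walk.support_append]
  have hAn : A.support.Nodup := hA.support_nodup
  have hBn : B.support.Nodup := hB.support_nodup
  have hBtail : B.support.tail.Nodup := hBn.tail
  have hanot : a ∉ B.support.tail := by
    have h' := hBn
    rw [B.support_eq_cons] at h'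
    exact (List.nodup_cons.mp h').1
  refine hAn.append hBtail ?_
  intro c hc1 hc2
  have hc2' : c ∈ B.support := by
    rw [B.support_eq_cons]; exact List.mem_cons_of_mem _ hc2
  exact hanot ((h c hc1 hc2') ▸ hc2)

lemma getVert_one_takeUntil {u v w : V} (p : G.Walk u v) (h : w ∈ p.support)
    (hpos : 0 < (p.takeUntil w h).length) : p.getVert 1 = (p.takeUntil w h).getVert 1 := by
  conv_lhs => rw [← p.take_spec h]
  rw [Walk.getVert_append]
  split_ifs with hlt
  · rfl
  · have h1 : (p.takeUntil w h).length = 1 := le_antisymm (not_lt.mp hlt) hpos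
    have h2 := (p.takeUntil w h).getVert_length
    rw [h1] at h2
    rw [h1, h2]
    simp

lemma share_only_start (hG : G.IsTree) {x a b : V} {A : G.Walk x a} {B : G.Walk x b}
    (hA : A.IsPath) (hB : B.IsPath) (hne : A.getVert 1 ≠ B.getVert 1) :
    ∀ c, c ∈ A.support → c ∈ B.support → c = x := by
  intro c hc1 hc2
  by_contra hcx
  have hAt := hA.takeUntil hc1
  have hBt := hB.takeUntil hc2
  have heq : A.takeUntil c hc1 = B.takeUntil c hc2 :=
    (hG.existsUnique_path x c).unique hAt hBt
  have hApos : 0 < (A.takeUntil c hc1).length :=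
    Nat.pos_of_ne_zero fun h0 => hcx (Walk.eq_of_length_eq_zero h0).symm
  have hBpos : 0 < (B.takeUntil c hc2).length := heq ▸ hApos
  exact hne (by
    rw [getVert_one_takeUntil A hc1 hApos, getVert_one_takeUntil B hc2 hBpos, heq])

/-- Medians exist in a tree. -/
lemma exists_median (hG : G.IsTree) (x y v : V) : ∃ m, IsTreeMedian G x y v m := by
  have hconn := hG.isConnected
  suffices H : ∀ (n : ℕ) (x y v : V), G.dist x y + G.dist x v ≤ n →
      ∃ m, IsTreeMedian G x y v m from H (G.dist x y + G.dist x v) x y v le_rfl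
  intro n
  induction n with
  | zero =>
    intro x y v h
    have hxy : G.dist x y = 0 := by omega
    have hxv : G.dist x v = 0 := by omega
    have hy : x = y := hconn.dist_eq_zero_iff.mp hxy
    have hv : x = v := hconn.dist_eq_zero_iff.mp hxv
    subst hy; subst hv
    exact ⟨x, by simp [IsTreeMedian, SimpleGraph.dist_self]⟩
  | succ n ih =>
    intro x y v hn
    by_cases hxy0 : G.dist x y = 0
    · have hy : x = y := hconn.dist_eq_zero_iff.mp hxy0
      subst hy
      exact ⟨x, by simp [IsTreeMedian, SimpleGraph.dist_self]⟩
    · obtain ⟨P, hP, -⟩ := hG.existsUnique_path x y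
      have hPlen : P.length = G.dist x y := path_length_eq hG P hP
      cases P with
      | nil => simp at hPlen; simp [SimpleGraph.dist_self] at hxy0
      | @cons _ w _ hxw P' =>
        have hP' : P'.IsPath := hP.of_cons
        have hwy : P'.length = G.dist w y := path_length_eq hG P' hP'
        have hdw : G.dist w y + 1 = G.dist x y := by
          simp only [Walk.length_cons] at hPlen; omega
        have hxw1 : G.dist x w ≤ 1 := by
          simpa using SimpleGraph.dist_le (Walk.cons hxw Walk.nil)
        by_cases hwv : G.dist w v < G.dist x v
        · have htri : G.dist x v ≤ G.dist x w + G.dist w v := hconn.dist_triangle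
          obtain ⟨m, hm1, hm2, hm3⟩ := ih w y v (by omega)
          have ht2 : G.dist x m ≤ G.dist x w + G.dist w m := hconn.dist_triangle
          have ht3 : G.dist x v ≤ G.dist x m + G.dist m v := hconn.dist_triangle
          exact ⟨m, by omega, by omega, hm3⟩
        · by_cases hxv0 : G.dist x v = 0
          · have hv : x = v := hconn.dist_eq_zero_iff.mp hxv0
            refine ⟨x, ?_, ?_, ?_⟩
            · simp [SimpleGraph.dist_self]
            · simp [SimpleGraph.dist_self]
            · subst hv
              rw [SimpleGraph.dist_self]
              rw [SimpleGraph.dist_comm (u := y) (v := x)]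
              omega
          · obtain ⟨Q, hQ, -⟩ := hG.existsUnique_path x v
            have hQlen : Q.length = G.dist x v := path_length_eq hG Q hQ
            cases Q with
            | nil => simp at hQlen; simp [SimpleGraph.dist_self] at hxv0
            | @cons _ u _ hxu Q' =>
              have hQ' : Q'.IsPath := hQ.of_cons
              have huv : Q'.length = G.dist u v := path_length_eq hG Q' hQ'
              have hdu : G.dist u v + 1 = G.dist x v := by
                simp only [Walk.length_cons] at hQlen; omega
              have hg1 : (Walk.cons hxw P').getVert 1 = w := by simp [Walk.getVert_cons_succ]
              have hg2 : (Walk.cons hxu Q').getVert 1 = u := by simp [Walk.getVert_cons_succ]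
              have hwvge : G.dist x v ≤ G.dist w v := not_lt.mp hwv
              have hwu : w ≠ u := by rintro rfl; omega
              have hshare := share_only_start hG hP hQ (by rw [hg1, hg2]; exact hwu)
              have hpath : ((Walk.cons hxw P').reverse.append (Walk.cons hxu Q')).IsPath := by
                apply append_isPath hP.reverse hQ
                intro c hc1 hc2
                refine hshare c ?_ hc2
                rwa [Walk.support_reverse, List.mem_reverse] at hc1
              have hlen2 : ((Walk.cons hxw P').reverse.append (Walk.cons hxu Q')).length
                  = G.dist x y + G.dist x v := by
                rw [Walk.length_append, Walk.length_reverse]; omega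
              have hyv : G.dist y v = G.dist x y + G.dist x v := by
                have h' := path_length_eq hG _ hpath
                omega
              refine ⟨x, ?_, ?_, ?_⟩
              · simp [SimpleGraph.dist_self]
              · simp [SimpleGraph.dist_self]
              · rw [SimpleGraph.dist_comm (u := y) (v := x)]; omega

lemma mem_path_of_between (hG : G.IsTree) {v y a : V} {P : G.Walk v y} (hP : P.IsPath)
    (ha : G.dist v a + G.dist a y = G.dist v y) : a ∈ P.support := by
  have hconn := hG.isConnected
  obtain ⟨A, hA, -⟩ := hG.existsUnique_path v a
  obtain ⟨B, hB, -⟩ := hG.existsUnique_path a y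
  have hAlen : A.length = G.dist v a := path_length_eq hG A hA
  have hBlen : B.length = G.dist a y := path_length_eq hG B hB
  have hdisj : ∀ c, c ∈ A.support → c ∈ B.support → c = a := by
    intro c hc1 hc2
    have t1 : G.dist v c ≤ (A.takeUntil c hc1).length := SimpleGraph.dist_le _
    have t2 : (A.takeUntil c hc1).length + (A.dropUntil c hc1).length = A.length := by
      rw [← Walk.length_append, A.take_spec hc1]
    have t4 : (B.takeUntil c hc2).length + (B.dropUntil c hc2).length = B.length := by
      rw [← Walk.length_append, B.take_spec hc2]
    have t5 : G.dist c y ≤ (B.dropUntil c hc2).length := SimpleGraph.dist_le _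
    have t6 : G.dist v y ≤ G.dist v c + G.dist c y := hconn.dist_triangle
    have t7 : (B.takeUntil c hc2).length = 0 := by omega
    exact (Walk.eq_of_length_eq_zero t7).symm
  have hpath : (A.append B).IsPath := append_isPath hA hB hdisj
  have hPeq : A.append B = P := (hG.existsUnique_path v y).unique hpath hP
  rw [← hPeq]
  exact (Walk.mem_support_append_iff _ _).mpr (Or.inl A.end_mem_support)

lemma between_dist (hG : G.IsTree) {v y a b : V}
    (ha : G.dist v a + G.dist a y = G.dist v y)
    (hb : G.dist v b + G.dist b y = G.dist v y)
    (hab : G.dist v a ≤ G.dist v b) :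
    G.dist a b + G.dist v a ≤ G.dist v b := by
  obtain ⟨P, hP, -⟩ := hG.existsUnique_path v y
  have hamem := mem_path_of_between hG hP ha
  have hbmem := mem_path_of_between hG hP hb
  have hTpath : (P.takeUntil a hamem).IsPath := hP.takeUntil hamem
  have hDpath : (P.dropUntil a hamem).IsPath := hP.dropUntil hamem
  have hTlen : (P.takeUntil a hamem).length = G.dist v a := path_length_eq hG _ hTpath
  have hDlen : (P.dropUntil a hamem).length = G.dist a y := path_length_eq hG _ hDpath
  have hsplit : b ∈ (P.takeUntil a hamem).support ∨ b ∈ (P.dropUntil a hamem).support := by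
    rw [← Walk.mem_support_append_iff, P.take_spec hamem]; exact hbmem
  have hcm : G.dist a b = G.dist b a := SimpleGraph.dist_comm (u := a) (v := b)
  rcases hsplit with hbT | hbD
  · have s1 : G.dist v b ≤ ((P.takeUntil a hamem).takeUntil b hbT).length := SimpleGraph.dist_le _
    have s2 : ((P.takeUntil a hamem).takeUntil b hbT).length
        + ((P.takeUntil a hamem).dropUntil b hbT).length = (P.takeUntil a hamem).length := by
      rw [← Walk.length_append, Walk.take_spec]
    have s3 : G.dist b a ≤ ((P.takeUntil a hamem).dropUntil b hbT).length := SimpleGraph.dist_le _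
    omega
  · have s1 : G.dist a b ≤ ((P.dropUntil a hamem).takeUntil b hbD).length := SimpleGraph.dist_le _
    have s2 : ((P.dropUntil a hamem).takeUntil b hbD).length
        + ((P.dropUntil a hamem).dropUntil b hbD).length = (P.dropUntil a hamem).length := by
      rw [← Walk.length_append, Walk.take_spec]
    have s3 : G.dist b y ≤ ((P.dropUntil a hamem).dropUntil b hbD).length := SimpleGraph.dist_le _
    omega

end TreeAux

/-- On the annulus `A_k = {x : k·r ≤ d(v,x) ≤ (k+1)·r}` of a tree, the relation
`x ∼_k y ↔ 2·d(v,m) ≥ (2k−1)·r`, where `m` is the median of `x, y, v`, is an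
equivalence relation. -/
theorem stmt_2 {V : Type*} (G : SimpleGraph V) (hG : G.IsTree) (v : V)
    (r k : ℕ) (hr : 1 ≤ r) (hk : 1 ≤ k) :
    let A : Set V := {x | k * r ≤ G.dist v x ∧ G.dist v x ≤ (k + 1) * r}
    let rel : V → V → Prop := fun x y =>
      ∃ m : V, IsTreeMedian G x y v m ∧
        (2 * (k : ℤ) - 1) * r ≤ 2 * (G.dist v m : ℤ)
    -- reflexive on A
    (∀ x ∈ A, rel x x) ∧
    -- symmetric on A
    (∀ x ∈ A, ∀ y ∈ A, rel x y → rel y x) ∧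
    -- transitive on A
    (∀ x ∈ A, ∀ y ∈ A, ∀ z ∈ A, rel x y → rel y z → rel x z) := by
  classical
  intro A rel
  have hconn := hG.isConnected
  refine ⟨?_, ?_, ?_⟩
  · -- reflexivity
    intro x hx
    refine ⟨x, ⟨by simp [SimpleGraph.dist_self], by simp [SimpleGraph.dist_self],
      by simp [SimpleGraph.dist_self]⟩, ?_⟩
    have h1 : (k : ℤ) * r ≤ (G.dist v x : ℤ) := by exact_mod_cast hx.1
    have h2 : (0 : ℤ) ≤ (r : ℤ) := Int.natCast_nonneg r
    have e : (2 * (k : ℤ) - 1) * r = 2 * ((k : ℤ) * r) - r := by ring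
    rw [e]; linarith
  · -- symmetry
    intro x hx y hy h
    obtain ⟨m, ⟨h1, h2, h3⟩, hc⟩ := h
    refine ⟨m, ⟨?_, h3, h2⟩, hc⟩
    rw [SimpleGraph.dist_comm (u := y) (v := x), SimpleGraph.dist_comm (u := y) (v := m), SimpleGraph.dist_comm (u := m) (v := x)]
    omega
  · -- transitivity
    intro x hx y hy z hz hxy hyz
    obtain ⟨m1, ⟨a1, a2, a3⟩, hc1⟩ := hxy
    obtain ⟨m2, ⟨b1, b2, b3⟩, hc2⟩ := hyz
    obtain ⟨m, hmed⟩ := TreeAux.exists_median hG x z v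
    obtain ⟨c1, c2, c3⟩ := hmed
    refine ⟨m, ⟨c1, c2, c3⟩, ?_⟩
    have hbet1 : G.dist v m1 + G.dist m1 y = G.dist v y := by
      rw [SimpleGraph.dist_comm (u := v) (v := m1), SimpleGraph.dist_comm (u := v) (v := y), SimpleGraph.dist_comm (u := m1) (v := y)]
      omega
    have hbet2 : G.dist v m2 + G.dist m2 y = G.dist v y := by
      rw [SimpleGraph.dist_comm (u := v) (v := m2), SimpleGraph.dist_comm (u := v) (v := y), SimpleGraph.dist_comm (u := m2) (v := y)]
      omega
    have tri1 : G.dist x z ≤ G.dist x m1 + G.dist m1 z := hconn.dist_triangle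
    have tri2 : G.dist m1 z ≤ G.dist m1 m2 + G.dist m2 z := hconn.dist_triangle
    have e1 : G.dist v m1 = G.dist m1 v := SimpleGraph.dist_comm (u := v) (v := m1)
    have e2 : G.dist v m2 = G.dist m2 v := SimpleGraph.dist_comm (u := v) (v := m2)
    have e3 : G.dist v m = G.dist m v := SimpleGraph.dist_comm (u := v) (v := m)
    have e4 : G.dist m2 z = G.dist z m2 := SimpleGraph.dist_comm (u := m2) (v := z)
    have e5 : G.dist m z = G.dist z m := SimpleGraph.dist_comm (u := m) (v := z)
    rcases le_total (G.dist v m1) (G.dist v m2) with hle | hle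
    · have hbb := TreeAux.between_dist hG hbet1 hbet2 hle
      refine le_trans hc1 ?_
      omega
    · have hbb := TreeAux.between_dist hG hbet2 hbet1 hle
      have e6 : G.dist m1 m2 = G.dist m2 m1 := SimpleGraph.dist_comm (u := m1) (v := m2)
      refine le_trans hc2 ?_
      omega
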